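/- arXiv:1508.00687 — 3 statements merged into one kernel-verified Lean document; each statement's English description precedes it below -/
import Mathlib

section
/- There exists a constant C > 0 such that for every T ∈ (0,1], (1/T) · ∫_{T^{1/4}}^∞ ∫_{-∞}^{T^{1/4}} exp( -(R/2 - x + T^{1/4})²/(2T) ) dx dR ≤ C · exp( -1/(32·√T) ). -/
open MeasureTheory

lemma integrableOn_exp_mul_Iio (b t : ℝ) (hb : 0 < b) :
    IntegrableOn (fun x : ℝ => Real.exp (b * x)) (Set.Iio t) := by
  have h_map : (volume.restrict (Set.Ioi (-t))).map Neg.neg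
      = volume.restrict (Set.Iio t) := by
    conv => rhs; rw [← Measure.map_neg_eq_self (volume : Measure ℝ),
      measurableEmbedding_neg.restrict_map]
    simp
  rw [IntegrableOn, ← h_map, measurableEmbedding_neg.integrable_map_iff]
  have := exp_neg_integrableOn_Ioi (-t) hb
  simpa [IntegrableOn, Function.comp_def, mul_neg, neg_mul] using this

lemma int_exp_neg_mul_Ioi (b a : ℝ) (hb : 0 < b) :
    ∫ x in Set.Ioi a, Real.exp (-(b * x)) = Real.exp (-(b * a)) / b := by
  have h2 := integral_comp_mul_left_Ioi (fun x => Real.exp (-x)) a hb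
  rw [integral_exp_neg_Ioi] at h2
  rw [h2, smul_eq_mul]
  ring

lemma int_exp_mul_Iio (b t : ℝ) (hb : 0 < b) :
    ∫ x in Set.Iio t, Real.exp (b * x) = Real.exp (b * t) / b := by
  rw [setIntegral_congr_set Iio_ae_eq_Iic]
  have h := integral_comp_neg_Iic t (fun x => Real.exp (-(b * x)))
  simp only [mul_neg, neg_neg] at h
  rw [h, int_exp_neg_mul_Ioi b (-t) hb, mul_neg, neg_neg]

lemma inner_bound (T t R : ℝ) (hT : 0 < T) (ht : 0 < t) (hR : t < R) :
    ∫ x in Set.Iio t, Real.exp (-(R / 2 - x + t)^2 / (2 * T)) ≤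
      (4 * T / R) * Real.exp (-R^2 / (8 * T)) := by
  have hRpos : 0 < R := ht.trans hR
  set b : ℝ := R / (4 * T) with hbdef
  have hb : 0 < b := by positivity
  have hbound : ∀ x ∈ Set.Iio t,
      Real.exp (-(R / 2 - x + t)^2 / (2 * T)) ≤
        (Real.exp (-R^2 / (8 * T)) * Real.exp (-(b * t))) * Real.exp (b * x) := by
    intro x hx
    rw [← Real.exp_add, ← Real.exp_add]
    apply Real.exp_le_exp.2
    rw [div_le_iff₀ (by positivity : (0:ℝ) < 2 * T)] at *
    have hx' : x < t := hx
    have hu : R / 2 ≤ R / 2 - x + t := by linarith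
    have hsq : (R/2) * (R / 2 - x + t) ≤ (R / 2 - x + t)^2 := by
      nlinarith
    have e1 : (-R^2 / (8*T) + -(b*t) + b*x) * (2*T)
        = -(R^2/4) + (R/2)*x - (R/2)*t := by
      rw [hbdef]
      field_simp [hbdef]
      ring
    rw [e1]
    nlinarith [hsq]
  have hnonneg : 0 ≤ᵐ[volume.restrict (Set.Iio t)]
      fun x => Real.exp (-(R / 2 - x + t)^2 / (2 * T)) :=
    Filter.Eventually.of_forall fun x => (Real.exp_pos _).le
  have hgint : Integrable
      (fun x => (Real.exp (-R^2 / (8 * T)) * Real.exp (-(b * t))) * Real.exp (b * x))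
      (volume.restrict (Set.Iio t)) :=
    (integrableOn_exp_mul_Iio b t hb).const_mul _
  have hle : (fun x => Real.exp (-(R / 2 - x + t)^2 / (2 * T)))
      ≤ᵐ[volume.restrict (Set.Iio t)]
      fun x => (Real.exp (-R^2 / (8 * T)) * Real.exp (-(b * t))) * Real.exp (b * x) :=
    (ae_restrict_iff' measurableSet_Iio).2 (Filter.Eventually.of_forall hbound)
  calc ∫ x in Set.Iio t, Real.exp (-(R / 2 - x + t)^2 / (2 * T))
      ≤ ∫ x in Set.Iio t,
        (Real.exp (-R^2 / (8 * T)) * Real.exp (-(b * t))) * Real.exp (b * x) :=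
        integral_mono_of_nonneg hnonneg hgint hle
    _ = (Real.exp (-R^2 / (8 * T)) * Real.exp (-(b * t))) * (Real.exp (b * t) / b) := by
        rw [integral_const_mul, int_exp_mul_Iio b t hb]
    _ = (4 * T / R) * Real.exp (-R^2 / (8 * T)) := by
        rw [Real.exp_neg, hbdef]
        field_simp [hbdef]

/-- There exists a constant `C > 0` such that for every `T ∈ (0,1]`,
`(1/T) · ∫_{T^{1/4}}^∞ ∫_{-∞}^{T^{1/4}} exp( -(R/2 - x + T^{1/4})²/(2T) ) dx dR
  ≤ C · exp( -1/(32·√T) )`. -/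
theorem stmt_5 :
    ∃ C : ℝ, 0 < C ∧ ∀ T : ℝ, 0 < T → T ≤ 1 →
      (1 / T) *
        ∫ R in Set.Ioi (T ^ ((1:ℝ)/4)),
          ∫ x in Set.Iio (T ^ ((1:ℝ)/4)),
            Real.exp (-(R / 2 - x + T ^ ((1:ℝ)/4))^2 / (2 * T)) ≤
      C * Real.exp (-1 / (32 * Real.sqrt T)) := by
  refine ⟨32, by norm_num, fun T hT hT1 => ?_⟩
  set t : ℝ := T ^ ((1:ℝ)/4) with htdef
  have ht : 0 < t := Real.rpow_pos_of_pos hT _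
  set s : ℝ := Real.sqrt T with hsdef
  have hs : 0 < s := Real.sqrt_pos.2 hT
  have hss : s * s = T := Real.mul_self_sqrt hT.le
  have hs1 : s ≤ 1 := by
    rw [hsdef, show (1:ℝ) = Real.sqrt 1 by simp]
    exact Real.sqrt_le_sqrt hT1
  have htt : t * t = s := by
    rw [htdef, hsdef, ← Real.rpow_add hT, Real.sqrt_eq_rpow]
    norm_num
  set c : ℝ := t / (8 * T) with hcdef
  have hc : 0 < c := by positivity
  have hct : c * t = 1 / (8 * s) := by
    rw [hcdef]
    field_simp
    nlinarith [htt, hss]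
  -- outer integral bound
  have hnn : 0 ≤ᵐ[volume.restrict (Set.Ioi t)]
      fun R => ∫ x in Set.Iio t, Real.exp (-(R / 2 - x + t)^2 / (2 * T)) :=
    Filter.Eventually.of_forall fun R =>
      integral_nonneg fun x => (Real.exp_pos _).le
  have hgint0 : IntegrableOn (fun R => Real.exp (-(c * R))) (Set.Ioi t) := by
    simpa [neg_mul] using exp_neg_integrableOn_Ioi t hc
  have hgint : Integrable (fun R => (4 * T / t) * Real.exp (-(c * R)))
      (volume.restrict (Set.Ioi t)) := hgint0.const_mul _
  have hle : (fun R => ∫ x in Set.Iio t, Real.exp (-(R / 2 - x + t)^2 / (2 * T)))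
      ≤ᵐ[volume.restrict (Set.Ioi t)]
      fun R => (4 * T / t) * Real.exp (-(c * R)) := by
    refine (ae_restrict_iff' measurableSet_Ioi).2 (Filter.Eventually.of_forall ?_)
    intro R hR
    have hR' : t < R := hR
    have hRpos : 0 < R := ht.trans hR'
    calc ∫ x in Set.Iio t, Real.exp (-(R / 2 - x + t)^2 / (2 * T))
        ≤ (4 * T / R) * Real.exp (-R^2 / (8 * T)) := inner_bound T t R hT ht hR'
      _ ≤ (4 * T / t) * Real.exp (-(c * R)) := by
          have h1 : 4 * T / R ≤ 4 * T / t :=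
            div_le_div_of_nonneg_left (by positivity) ht hR'.le
          have h2 : Real.exp (-R^2 / (8 * T)) ≤ Real.exp (-(c * R)) := by
            apply Real.exp_le_exp.2
            have : -(c * R) = -(t * R) / (8 * T) := by rw [hcdef]; ring
            rw [this, div_le_div_iff₀ (by positivity) (by positivity)]
            nlinarith [mul_nonneg (mul_nonneg (sub_nonneg.2 hR'.le) hRpos.le)
              (by positivity : (0:ℝ) ≤ 8 * T)]
          exact mul_le_mul h1 h2 (Real.exp_pos _).le (by positivity)
  have houter : ∫ R in Set.Ioi t,
      ∫ x in Set.Iio t, Real.exp (-(R / 2 - x + t)^2 / (2 * T))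
      ≤ (4 * T / t) * (Real.exp (-(c * t)) / c) := by
    calc ∫ R in Set.Ioi t, ∫ x in Set.Iio t, Real.exp (-(R / 2 - x + t)^2 / (2 * T))
        ≤ ∫ R in Set.Ioi t, (4 * T / t) * Real.exp (-(c * R)) :=
          integral_mono_of_nonneg hnn hgint hle
      _ = (4 * T / t) * (Real.exp (-(c * t)) / c) := by
          rw [integral_const_mul, int_exp_neg_mul_Ioi c t hc]
  have hsc : (1 / T) * ((4 * T / t) * ((1:ℝ) / c)) = 32 * s := by
    rw [hcdef]
    field_simp
    rw [sq, htt, ← hss]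
    ring
  calc (1 / T) * ∫ R in Set.Ioi t,
        ∫ x in Set.Iio t, Real.exp (-(R / 2 - x + t)^2 / (2 * T))
      ≤ (1 / T) * ((4 * T / t) * (Real.exp (-(c * t)) / c)) :=
        mul_le_mul_of_nonneg_left houter (by positivity)
    _ = (1 / T) * ((4 * T / t) * ((1:ℝ) / c)) * Real.exp (-(c * t)) := by ring
    _ = 32 * s * Real.exp (-1 / (8 * s)) := by
        rw [hsc, show -(c * t) = -1 / (8 * s) by rw [hct]; ring]
    _ ≤ 32 * Real.exp (-1 / (32 * s)) := by
        have h1 : Real.exp (-1 / (8 * s)) ≤ Real.exp (-1 / (32 * s)) := by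
          apply Real.exp_le_exp.2
          rw [neg_div, neg_div, neg_le_neg_iff]
          apply one_div_le_one_div_of_le (by positivity)
          linarith
        nlinarith [Real.exp_pos (-1 / (8 * s)), Real.exp_pos (-1 / (32 * s))]
end

section
/- Let f : ℝ → [0,∞) be continuous, N ∈ ℕ, and let Φ : ℝ → [0,∞) be continuous with support contained in (-1,0) and ∫_ℝ Φ = 1. For m₀ > 0 set Φ_{m₀}(x) = (1/m₀)·Φ(x/m₀) and R^N_{m₀}(f) := ∫_0^{m₀} Φ_{m₀}(-m) · R^{m,N}(f) dm. Then for all 0 < m₀ ≤ m one has R^{m,N}(f) ≤ R^N_{m₀}(f) ≤ R^{0,N}(f), and R^N_{m₀}(f) → R^{0,N}(f) as m₀ ↓ 0⁺. -/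
open MeasureTheory

/-- The approximating right wavefront marker
`R^{m,N}(f) = sup{ x ∈ [-N,N] : f(x) > 0 and ∫_x^N f ≥ m }`, with the convention
`sup ∅ = -N` (realized by inserting `-N` into the set). -/
noncomputable def RmN (N : ℕ) (f : ℝ → ℝ) (m : ℝ) : ℝ :=
  sSup (insert (-(N : ℝ))
    {x : ℝ | x ∈ Set.Icc (-(N : ℝ)) (N : ℝ) ∧ 0 < f x ∧ m ≤ ∫ y in x..(N : ℝ), f y})

/-- `R^{0,N}(f) = sup{ x ∈ [-N,N] : f(x) > 0 }` if this set is nonempty, and `-N`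
otherwise (realized by inserting `-N` into the set). -/
noncomputable def R0N (N : ℕ) (f : ℝ → ℝ) : ℝ :=
  sSup (insert (-(N : ℝ)) {x : ℝ | x ∈ Set.Icc (-(N : ℝ)) (N : ℝ) ∧ 0 < f x})

/-- The mollified wavefront marker
`R^N_{m₀}(f) = ∫_0^{m₀} Φ_{m₀}(-m) · R^{m,N}(f) dm`, where `Φ_{m₀}(x) = (1/m₀)Φ(x/m₀)`. -/
noncomputable def RNmoll (N : ℕ) (Φ : ℝ → ℝ) (m₀ : ℝ) (f : ℝ → ℝ) : ℝ :=
  ∫ m in (0:ℝ)..m₀, (1 / m₀) * Φ (-m / m₀) * RmN N f m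

open Filter

lemma bdd_aux (N : ℕ) (P : ℝ → Prop) :
    BddAbove (insert (-(N:ℝ)) {x : ℝ | x ∈ Set.Icc (-(N:ℝ)) (N:ℝ) ∧ P x}) := by
  refine ⟨N, ?_⟩
  rintro x (rfl | ⟨hx, _⟩)
  · exact neg_le_self (by positivity)
  · exact hx.2

lemma RmN_anti (N : ℕ) (f : ℝ → ℝ) : Antitone (RmN N f) := by
  intro m m' h
  apply csSup_le_csSup (bdd_aux N _) ⟨_, Set.mem_insert _ _⟩
  rintro x (rfl | ⟨h1, h2, h3⟩)
  · exact Set.mem_insert _ _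
  · exact Set.mem_insert_of_mem _ ⟨h1, h2, h.trans h3⟩

lemma neg_le_RmN (N : ℕ) (f : ℝ → ℝ) (m : ℝ) : -(N:ℝ) ≤ RmN N f m :=
  le_csSup (bdd_aux N _) (Set.mem_insert _ _)

lemma RmN_le_R0N (N : ℕ) (f : ℝ → ℝ) (m : ℝ) : RmN N f m ≤ R0N N f := by
  apply csSup_le_csSup (bdd_aux N _) ⟨_, Set.mem_insert _ _⟩
  rintro x (rfl | ⟨h1, h2, _⟩)
  · exact Set.mem_insert _ _
  · exact Set.mem_insert_of_mem _ ⟨h1, h2⟩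

lemma weight_cont (Φ : ℝ → ℝ) (hΦc : Continuous Φ) (m₀ : ℝ) :
    Continuous (fun m : ℝ => (1 / m₀) * Φ (-m / m₀)) :=
  continuous_const.mul (hΦc.comp ((continuous_neg).div_const m₀))

lemma integrand_integrable (Φ : ℝ → ℝ) (hΦc : Continuous Φ) (m₀ : ℝ) (g : ℝ → ℝ)
    (hg : Antitone g) :
    IntervalIntegrable (fun m => (1 / m₀) * Φ (-m / m₀) * g m) volume 0 m₀ :=
  hg.intervalIntegrable.continuousOn_mul (weight_cont Φ hΦc m₀).continuousOn

lemma weight_integral (Φ : ℝ → ℝ) (hΦsupp : Function.support Φ ⊆ Set.Ioo (-1 : ℝ) 0)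
    (hΦint : ∫ x : ℝ, Φ x = 1) {m₀ : ℝ} (hm₀ : 0 < m₀) :
    ∫ m in (0:ℝ)..m₀, (1 / m₀) * Φ (-m / m₀) = 1 := by
  have h2 : ∫ x in (-1:ℝ)..0, Φ x = 1 := by
    rw [intervalIntegral.integral_of_le (by norm_num), integral_Ioc_eq_integral_Ioo,
      setIntegral_eq_integral_of_forall_compl_eq_zero, hΦint]
    intro x hx
    by_contra h
    exact hx (hΦsupp h)
  have h1 : (∫ m in (0:ℝ)..m₀, (1 / m₀) * Φ (-m / m₀))
      = (1 / m₀) * ∫ m in (0:ℝ)..m₀, (fun u => Φ (-u)) (m / m₀) := by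
    rw [← intervalIntegral.integral_const_mul]
    apply intervalIntegral.integral_congr
    intro x _
    simp [neg_div]
  have h3 := intervalIntegral.integral_comp_div (a := 0) (b := m₀) (c := m₀)
    (fun u => Φ (-u)) hm₀.ne'
  rw [h1, h3, zero_div, div_self hm₀.ne', intervalIntegral.integral_comp_neg, neg_zero,
    h2, smul_eq_mul, mul_one, one_div, inv_mul_cancel₀ hm₀.ne']

lemma moll_bounds (f : ℝ → ℝ) (N : ℕ) (Φ : ℝ → ℝ) (hΦc : Continuous Φ) (hΦ0 : ∀ x, 0 ≤ Φ x)
    (hΦsupp : Function.support Φ ⊆ Set.Ioo (-1:ℝ) 0) (hΦint : ∫ x : ℝ, Φ x = 1)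
    {m₀ : ℝ} (hm₀ : 0 < m₀) :
    RmN N f m₀ ≤ RNmoll N Φ m₀ f ∧ RNmoll N Φ m₀ f ≤ R0N N f := by
  have hw : ∀ x : ℝ, 0 ≤ (1 / m₀) * Φ (-x / m₀) := fun x => mul_nonneg (by positivity) (hΦ0 _)
  have hWint := weight_integral Φ hΦsupp hΦint hm₀
  have hint := integrand_integrable Φ hΦc m₀ (RmN N f) (RmN_anti N f)
  constructor
  · have hc : (RmN N f m₀) = ∫ x in (0:ℝ)..m₀, (1 / m₀) * Φ (-x / m₀) * RmN N f m₀ := by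
      rw [intervalIntegral.integral_mul_const, hWint, one_mul]
    rw [hc]
    unfold RNmoll
    apply intervalIntegral.integral_mono_on hm₀.le
      (integrand_integrable Φ hΦc m₀ _ antitone_const) hint
    intro x hx
    exact mul_le_mul_of_nonneg_left (RmN_anti N f hx.2) (hw x)
  · have hc : (R0N N f) = ∫ x in (0:ℝ)..m₀, (1 / m₀) * Φ (-x / m₀) * R0N N f := by
      rw [intervalIntegral.integral_mul_const, hWint, one_mul]
    rw [hc]
    unfold RNmoll
    apply intervalIntegral.integral_mono_on hm₀.le hint
      (integrand_integrable Φ hΦc m₀ _ antitone_const)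
    intro x _
    exact mul_le_mul_of_nonneg_left (RmN_le_R0N N f x) (hw x)

lemma RmN_tendsto (f : ℝ → ℝ) (hf : Continuous f) (hf0 : ∀ x, 0 ≤ f x) (N : ℕ) :
    Filter.Tendsto (fun m => RmN N f m) (nhdsWithin 0 (Set.Ioi 0)) (nhds (R0N N f)) := by
  rw [tendsto_order]
  constructor
  · intro a ha
    by_cases haN : a < -(N:ℝ)
    · exact Eventually.of_forall fun m => haN.trans_le (neg_le_RmN N f m)
    push_neg at haN
    obtain ⟨y, hy, hay⟩ := exists_lt_of_lt_csSup ⟨_, Set.mem_insert _ _⟩ ha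
    rcases hy with rfl | ⟨hyI, hyf⟩
    · exact Eventually.of_forall fun m => hay.trans_le (neg_le_RmN N f m)
    have hopen : IsOpen {x : ℝ | 0 < f x} := isOpen_lt continuous_const hf
    obtain ⟨z, hzI, hzf, haz, hzN⟩ :
        ∃ z, z ∈ Set.Icc (-(N:ℝ)) N ∧ 0 < f z ∧ a < z ∧ z < N := by
      rcases lt_or_eq_of_le hyI.2 with h | h
      · exact ⟨y, hyI, hyf, hay, h⟩
      · obtain ⟨δ, hδ, hball⟩ := Metric.isOpen_iff.1 hopen _ hyf
        rw [h] at hay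
        set z := max ((N:ℝ) - δ/2) ((a + N)/2) with hz
        have h1 : (N:ℝ) - δ/2 ≤ z := le_max_left _ _
        have h2 : (a + N)/2 ≤ z := le_max_right _ _
        have h3 : z < N := max_lt (by linarith) (by linarith)
        refine ⟨z, ⟨by linarith, h3.le⟩, ?_, by linarith, h3⟩
        apply hball
        rw [Metric.mem_ball, Real.dist_eq, h, abs_lt]
        constructor <;> linarith
    have hm₁ : 0 < ∫ y in z..(N:ℝ), f y := by
      obtain ⟨δ, hδ, hball⟩ := Metric.isOpen_iff.1 hopen _ hzf
      set c := min (z + δ/2) (N:ℝ) with hc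
      have hzc : z < c := lt_min (by linarith) hzN
      have hcN : c ≤ N := min_le_right _ _
      have hpos : ∀ x ∈ Set.Ioo z c, 0 < f x := by
        intro x hx
        apply hball
        have hxc : x < z + δ/2 := hx.2.trans_le (min_le_left _ _)
        rw [Metric.mem_ball, Real.dist_eq, abs_lt]
        exact ⟨by linarith [hx.1], by linarith [hx.1]⟩
      have h1 : 0 < ∫ x in z..c, f x :=
        intervalIntegral.intervalIntegral_pos_of_pos_on (hf.intervalIntegrable z c) hpos hzc
      have h2 : 0 ≤ ∫ x in c..(N:ℝ), f x :=
        intervalIntegral.integral_nonneg hcN (fun x _ => hf0 x)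
      have h3 : (∫ x in z..c, f x) + ∫ x in c..(N:ℝ), f x = ∫ x in z..(N:ℝ), f x :=
        intervalIntegral.integral_add_adjacent_intervals
          (hf.intervalIntegrable z c) (hf.intervalIntegrable c N)
      rw [← h3]
      linarith
    filter_upwards [Ioo_mem_nhdsGT_of_mem ⟨le_refl (0:ℝ), hm₁⟩] with m hm
    have hz_mem : z ∈ insert (-(N:ℝ))
        {x : ℝ | x ∈ Set.Icc (-(N:ℝ)) (N:ℝ) ∧ 0 < f x ∧ m ≤ ∫ y in x..(N:ℝ), f y} :=
      Set.mem_insert_of_mem _ ⟨hzI, hzf, hm.2.le⟩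
    exact haz.trans_le (le_csSup (bdd_aux N _) hz_mem)
  · intro a ha
    exact Filter.Eventually.of_forall fun m => (RmN_le_R0N N f m).trans_lt ha

/-- For continuous nonnegative `f`, a continuous mollifier `Φ ≥ 0` supported in `(-1,0)`
with `∫ Φ = 1`, and all `0 < m₀ ≤ m`, one has
`R^{m,N}(f) ≤ R^N_{m₀}(f) ≤ R^{0,N}(f)`, and `R^N_{m₀}(f) → R^{0,N}(f)` as `m₀ ↓ 0⁺`. -/
theorem stmt_10 (f : ℝ → ℝ) (hf : Continuous f) (hf0 : ∀ x, 0 ≤ f x) (N : ℕ)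
    (Φ : ℝ → ℝ) (hΦc : Continuous Φ) (hΦ0 : ∀ x, 0 ≤ Φ x)
    (hΦsupp : Function.support Φ ⊆ Set.Ioo (-1 : ℝ) 0)
    (hΦint : ∫ x : ℝ, Φ x = 1) :
    (∀ m₀ m : ℝ, 0 < m₀ → m₀ ≤ m →
      RmN N f m ≤ RNmoll N Φ m₀ f ∧ RNmoll N Φ m₀ f ≤ R0N N f) ∧
    Filter.Tendsto (fun m₀ : ℝ => RNmoll N Φ m₀ f)
      (nhdsWithin 0 (Set.Ioi 0)) (nhds (R0N N f)) := by

  constructor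
  · intro m₀ m hm₀ hm
    have hb := moll_bounds f N Φ hΦc hΦ0 hΦsupp hΦint hm₀
    exact ⟨(RmN_anti N f hm).trans hb.1, hb.2⟩
  · apply tendsto_of_tendsto_of_tendsto_of_le_of_le' (RmN_tendsto f hf hf0 N) tendsto_const_nhds
    · filter_upwards [self_mem_nhdsWithin] with m₀ hm₀
      exact (moll_bounds f N Φ hΦc hΦ0 hΦsupp hΦint hm₀).1
    · filter_upwards [self_mem_nhdsWithin] with m₀ hm₀
      exact (moll_bounds f N Φ hΦc hΦ0 hΦsupp hΦint hm₀).2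
end

section
/- Let N ∈ ℕ, m₀ > 0, and let Φ : ℝ → [0,∞) be continuous with support contained in (-1,0) and ∫_ℝ Φ = 1; set Φ_{m₀}(x) = (1/m₀)·Φ(x/m₀) and, for continuous f : ℝ → [0,∞), R^N_{m₀}(f) := ∫_0^{m₀} Φ_{m₀}(-m) · R^{m,N}(f) dm. Then the map f ↦ R^N_{m₀}(f) is continuous with respect to uniform convergence on [-N,N]: if fₖ, f : ℝ → [0,∞) are continuous and fₖ → f uniformly on [-N,N], then R^N_{m₀}(fₖ) → R^N_{m₀}(f). -/
open MeasureTheory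

namespace WaveAux

open Set Filter

variable {N : ℕ} {f : ℝ → ℝ} {m : ℝ}

lemma bddAbove_aux (N : ℕ) (f : ℝ → ℝ) (m : ℝ) :
    BddAbove (insert (-(N : ℝ))
      {x : ℝ | x ∈ Set.Icc (-(N : ℝ)) (N : ℝ) ∧ 0 < f x ∧ m ≤ ∫ y in x..(N : ℝ), f y}) := by
  refine ⟨N, ?_⟩
  rintro x (rfl | hx)
  · simp [neg_le_self_iff]
  · exact hx.1.2

lemma neg_le_RmN (N : ℕ) (f : ℝ → ℝ) (m : ℝ) : -(N : ℝ) ≤ RmN N f m :=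
  le_csSup (bddAbove_aux N f m) (Set.mem_insert _ _)

lemma RmN_le (N : ℕ) (f : ℝ → ℝ) (m : ℝ) : RmN N f m ≤ (N : ℝ) := by
  refine csSup_le (Set.insert_nonempty _ _) ?_
  rintro x (rfl | hx)
  · simp [neg_le_self_iff]
  · exact hx.1.2

lemma RmN_antitone (N : ℕ) (f : ℝ → ℝ) : Antitone (RmN N f) := by
  intro m m' h
  refine csSup_le_csSup (bddAbove_aux N f m) (Set.insert_nonempty _ _) ?_
  refine Set.insert_subset_insert ?_
  exact fun x hx => ⟨hx.1, hx.2.1, h.trans hx.2.2⟩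

lemma mem_le_RmN {x : ℝ} (hx : x ∈ Set.Icc (-(N : ℝ)) (N : ℝ)) (hfx : 0 < f x)
    (hint : m ≤ ∫ y in x..(N : ℝ), f y) : x ≤ RmN N f m :=
  le_csSup (bddAbove_aux N f m) (Set.mem_insert_of_mem _ ⟨hx, hfx, hint⟩)

lemma continuous_If (hf : Continuous f) (N : ℝ) :
    Continuous fun z => ∫ y in z..N, f y := by
  have h : Continuous fun z => ∫ y in N..z, f y :=
    intervalIntegral.continuous_primitive (fun a b => hf.intervalIntegrable a b) N
  have := h.neg
  replace this := this.congr fun z => (intervalIntegral.integral_symm _ _).symm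
  exact this

lemma integral_zero_on_Ico {a b : ℝ} (hab : a ≤ b) (h : ∀ x ∈ Set.Ico a b, f x = 0) :
    ∫ y in a..b, f y = 0 := by
  rw [intervalIntegral.integral_of_le hab, MeasureTheory.integral_Ioc_eq_integral_Ioo]
  exact MeasureTheory.setIntegral_eq_zero_of_forall_eq_zero fun x hx => h x ⟨hx.1.le, hx.2⟩

/-- The key lower-bound lemma: if `m < ∫_x^N f` (strictly) with `0 < m`, then `x ≤ RmN N f m`. -/
lemma le_RmN_of_lt (hf : Continuous f) (hf0 : ∀ x, 0 ≤ f x) {x : ℝ}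
    (hm : 0 < m) (hx : x ∈ Set.Icc (-(N : ℝ)) (N : ℝ))
    (hint : m < ∫ y in x..(N : ℝ), f y) : x ≤ RmN N f m := by
  set P : Set ℝ := {z | z ∈ Set.Icc x (N : ℝ) ∧ 0 < f z} with hP
  have hxN : x ≤ (N : ℝ) := hx.2
  have hPne : P.Nonempty := by
    by_contra hne
    rw [Set.not_nonempty_iff_eq_empty] at hne
    have hz : ∀ z ∈ Set.Ico x (N : ℝ), f z = 0 := by
      intro z hz
      by_contra h0
      have : z ∈ P := ⟨⟨hz.1, hz.2.le⟩, lt_of_le_of_ne (hf0 z) (Ne.symm h0)⟩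
      simp [hne] at this
    have := integral_zero_on_Ico hxN hz
    rw [this] at hint
    exact absurd hint (not_lt.2 hm.le)
  have hPbdd : BddBelow P := ⟨x, fun z hz => hz.1.1⟩
  set z₀ := sInf P with hz₀def
  have hxz₀ : x ≤ z₀ := le_csInf hPne fun z hz => hz.1.1
  obtain ⟨w, hw⟩ := id hPne
  have hz₀N : z₀ ≤ (N : ℝ) := (csInf_le hPbdd hw).trans hw.1.2
  -- f vanishes on [x, z₀)
  have hzero : ∀ z ∈ Set.Ico x z₀, f z = 0 := by
    intro z hz
    by_contra h0
    have hzP : z ∈ P := ⟨⟨hz.1, hz.2.le.trans hz₀N⟩, lt_of_le_of_ne (hf0 z) (Ne.symm h0)⟩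
    exact absurd (csInf_le hPbdd hzP) (not_le.2 hz.2)
  have hsplit : (∫ y in x..z₀, f y) + ∫ y in z₀..(N : ℝ), f y = ∫ y in x..(N : ℝ), f y :=
    intervalIntegral.integral_add_adjacent_intervals (hf.intervalIntegrable _ _)
      (hf.intervalIntegrable _ _)
  have h0 : (∫ y in x..z₀, f y) = 0 := integral_zero_on_Ico hxz₀ hzero
  have hIz₀ : m < ∫ y in z₀..(N : ℝ), f y := by
    rw [← hsplit, h0, zero_add] at hint; exact hint
  -- continuity of the tail integral at z₀
  have hc : ContinuousAt (fun z => ∫ y in z..(N : ℝ), f y) z₀ :=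
    (continuous_If hf N).continuousAt
  have hev : ∀ᶠ z in nhds z₀, m < ∫ y in z..(N : ℝ), f y :=
    continuousAt_const.eventually_lt hc hIz₀
  rw [Metric.eventually_nhds_iff] at hev
  obtain ⟨δ, hδ, hball⟩ := hev
  obtain ⟨z, hzP, hzlt⟩ := (csInf_lt_iff hPbdd hPne).1 (by linarith : sInf P < z₀ + δ)
  have hz₀z : z₀ ≤ z := csInf_le hPbdd hzP
  have hdist : dist z z₀ < δ := by
    rw [Real.dist_eq, abs_of_nonneg (by linarith)]; linarith
  have : z ≤ RmN N f m :=
    mem_le_RmN ⟨le_trans hx.1 (hxz₀.trans hz₀z), hzP.1.2⟩ hzP.2 (hball hdist).le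
  linarith

end WaveAux

namespace WaveAux
open Set Filter

lemma integral_close {N : ℕ} {g h : ℝ → ℝ} (hg : Continuous g) (hh : Continuous h) {θ : ℝ}
    (hθ : 0 ≤ θ) (hcl : ∀ y ∈ Set.Icc (-(N : ℝ)) (N : ℝ), |g y - h y| ≤ θ)
    {x : ℝ} (hx : x ∈ Set.Icc (-(N : ℝ)) (N : ℝ)) :
    |(∫ y in x..(N : ℝ), g y) - ∫ y in x..(N : ℝ), h y| ≤ θ * (2 * N) := by
  rw [← intervalIntegral.integral_sub (hg.intervalIntegrable _ _) (hh.intervalIntegrable _ _)]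
  have hxN : x ≤ (N : ℝ) := hx.2
  have hb := intervalIntegral.norm_integral_le_of_norm_le_const
    (C := θ) (f := fun y => g y - h y) (a := x) (b := (N : ℝ)) ?_
  · rw [Real.norm_eq_abs] at hb
    refine hb.trans ?_
    have h1 : |(N : ℝ) - x| ≤ 2 * N := by
      rw [abs_of_nonneg (by linarith)]
      have := hx.1; linarith
    nlinarith [abs_nonneg ((N : ℝ) - x)]
  · intro y hy
    rw [Set.uIoc_of_le hxN] at hy
    rw [Real.norm_eq_abs]
    exact hcl y ⟨le_trans hx.1 hy.1.le, hy.2⟩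

lemma tendsto_RmN (N : ℕ) (fk : ℕ → ℝ → ℝ) (hfk : ∀ k, Continuous (fk k))
    (f : ℝ → ℝ) (hf : Continuous f) (hf0 : ∀ x, 0 ≤ f x)
    (hconv : TendstoUniformlyOn fk f atTop (Set.Icc (-(N : ℝ)) (N : ℝ)))
    {m : ℝ} (hm : 0 < m) (hcont : ContinuousAt (RmN N f) m) :
    Tendsto (fun k => RmN N (fk k) m) atTop (nhds (RmN N f m)) := by
  rw [Metric.tendsto_nhds]
  intro ε hε
  obtain ⟨δ', hδ', hδ'prop⟩ := Metric.continuousAt_iff.1 hcont (ε / 2) (by linarith)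
  set δ : ℝ := min (δ' / 2) (m / 2) with hδdef
  have hδpos : 0 < δ := lt_min (by linarith) (by linarith)
  have hδm : δ < m := (min_le_right _ _).trans_lt (by linarith)
  have hmδ : 0 < m - δ := by linarith
  have hδδ' : δ < δ' := (min_le_left _ _).trans_lt (by linarith)
  have h1 : RmN N f (m - δ) < RmN N f m + ε / 2 := by
    have := hδ'prop (x := m - δ) (by rw [Real.dist_eq]; rw [abs_of_nonpos (by linarith)]; linarith)
    rw [Real.dist_eq, abs_sub_lt_iff] at this
    linarith [this.1]
  have h2 : RmN N f m - ε / 2 < RmN N f (m + δ) := by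
    have := hδ'prop (x := m + δ) (by rw [Real.dist_eq]; rw [abs_of_nonneg (by linarith)]; linarith)
    rw [Real.dist_eq, abs_sub_lt_iff] at this
    linarith [this.2]
  set θ : ℝ := δ / (2 * (N : ℝ) + 1) with hθdef
  have hNn : (0 : ℝ) ≤ (N : ℝ) := N.cast_nonneg
  have hθpos : 0 < θ := by positivity
  have hθ2N : θ * (2 * N) < δ := by
    rw [hθdef, div_mul_eq_mul_div, div_lt_iff₀ (by positivity)]
    nlinarith
  -- choose a near-optimal x for the lower bound
  obtain ⟨x, hxmem, hxlt⟩ := exists_lt_of_lt_csSup (Set.insert_nonempty _ _)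
    (show RmN N f (m + δ) - ε / 2 < RmN N f (m + δ) by linarith)
  have Ev1 := Metric.tendstoUniformlyOn_iff.1 hconv θ hθpos
  have Ev2 : ∀ᶠ k in atTop, (x ∈ {x : ℝ | x ∈ Set.Icc (-(N : ℝ)) (N : ℝ) ∧ 0 < f x ∧
      m + δ ≤ ∫ y in x..(N : ℝ), f y}) → 0 < fk k x := by
    by_cases hxS : x ∈ {x : ℝ | x ∈ Set.Icc (-(N : ℝ)) (N : ℝ) ∧ 0 < f x ∧
        m + δ ≤ ∫ y in x..(N : ℝ), f y}
    · have hten := hconv.tendsto_at hxS.1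
      exact (hten.eventually (eventually_gt_nhds hxS.2.1)).mono fun k hk _ => hk
    · exact Filter.Eventually.of_forall fun k h => absurd h hxS
  filter_upwards [Ev1, Ev2] with k hk1 hk2
  have hclose : ∀ y ∈ Set.Icc (-(N : ℝ)) (N : ℝ), |fk k y - f y| ≤ θ := by
    intro y hy
    have := hk1 y hy
    rw [Real.dist_eq, abs_sub_comm] at this
    exact this.le
  -- upper bound
  have hup : RmN N (fk k) m ≤ RmN N f (m - δ) := by
    refine csSup_le (Set.insert_nonempty _ _) ?_
    rintro y (rfl | hy)
    · exact neg_le_RmN N f (m - δ)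
    · have hic := integral_close (N := N) (hfk k) hf hθpos.le hclose hy.1
      have hint : m - δ < ∫ z in y..(N : ℝ), f z := by
        have := abs_sub_le_iff.1 hic
        have h3 := hy.2.2
        linarith [this.1, this.2]
      exact le_RmN_of_lt hf hf0 hmδ hy.1 hint
  -- lower bound
  have hlow : x ≤ RmN N (fk k) m := by
    rcases hxmem with rfl | hxS
    · exact neg_le_RmN N (fk k) m
    · have hfkx : 0 < fk k x := hk2 hxS
      have hic := integral_close (N := N) (hfk k) hf hθpos.le hclose hxS.1
      have hint : m ≤ ∫ z in x..(N : ℝ), fk k z := by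
        have := abs_sub_le_iff.1 hic
        have h3 := hxS.2.2
        linarith [this.1, this.2]
      exact mem_le_RmN hxS.1 hfkx hint
  rw [Real.dist_eq, abs_sub_lt_iff]
  constructor
  · linarith
  · linarith

end WaveAux


/-- The mollified wavefront marker `f ↦ R^N_{m₀}(f)` is continuous with respect to uniform
convergence on `[-N,N]` on the class of continuous nonnegative functions: if `fₖ → f`
uniformly on `[-N,N]`, then `R^N_{m₀}(fₖ) → R^N_{m₀}(f)`. -/
theorem stmt_11 (N : ℕ) (m₀ : ℝ) (hm₀ : 0 < m₀)
    (Φ : ℝ → ℝ) (hΦc : Continuous Φ) (hΦ0 : ∀ x, 0 ≤ Φ x)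
    (hΦsupp : Function.support Φ ⊆ Set.Ioo (-1 : ℝ) 0)
    (hΦint : ∫ x : ℝ, Φ x = 1)
    (fk : ℕ → ℝ → ℝ) (hfk : ∀ k, Continuous (fk k)) (hfk0 : ∀ k x, 0 ≤ fk k x)
    (f : ℝ → ℝ) (hf : Continuous f) (hf0 : ∀ x, 0 ≤ f x)
    (hconv : TendstoUniformlyOn fk f Filter.atTop (Set.Icc (-(N : ℝ)) (N : ℝ))) :
    Filter.Tendsto (fun k => RNmoll N Φ m₀ (fk k)) Filter.atTop
      (nhds (RNmoll N Φ m₀ f)) := by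
  -- a bound for Φ
  obtain ⟨z, hz, hmax⟩ := isCompact_Icc.exists_isMaxOn (Set.nonempty_Icc.2 (by norm_num))
    (hΦc.continuousOn (s := Set.Icc (-1 : ℝ) 0))
  set C : ℝ := Φ z with hC
  have hC0 : 0 ≤ C := hΦ0 z
  have hCb : ∀ x, Φ x ≤ C := by
    intro x
    by_cases hx : x ∈ Set.Icc (-1 : ℝ) 0
    · exact hmax hx
    · have : Φ x = 0 := by
        by_contra h
        exact hx (Set.Ioo_subset_Icc_self (hΦsupp h))
      rw [this]; exact hC0
  unfold RNmoll
  have hmeasR : ∀ g : ℝ → ℝ, Measurable fun m => (1 / m₀) * Φ (-m / m₀) * RmN N g m := by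
    intro g
    exact (measurable_const.mul (hΦc.measurable.comp (measurable_id.neg.div_const m₀))).mul
      (WaveAux.RmN_antitone N g).measurable
  refine intervalIntegral.tendsto_integral_filter_of_dominated_convergence
    (fun _ => (1 / m₀) * C * N) ?_ ?_ ?_ ?_
  · exact Filter.Eventually.of_forall fun k => ((hmeasR (fk k)).aestronglyMeasurable).restrict
  · refine Filter.Eventually.of_forall fun k => Filter.Eventually.of_forall fun m _ => ?_
    rw [Real.norm_eq_abs, abs_mul, abs_mul,
      abs_of_nonneg (le_of_lt (by positivity : (0:ℝ) < 1 / m₀)), abs_of_nonneg (hΦ0 _)]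
    have hRabs : |RmN N (fk k) m| ≤ (N : ℝ) :=
      abs_le.2 ⟨WaveAux.neg_le_RmN N (fk k) m, WaveAux.RmN_le N (fk k) m⟩
    have h1 : (0:ℝ) < 1 / m₀ := by positivity
    exact mul_le_mul (mul_le_mul le_rfl (hCb _) (hΦ0 _) h1.le) hRabs (abs_nonneg _)
      (by positivity)
  · exact intervalIntegrable_const
  · have hD : ∀ᵐ m : ℝ, ¬m ∈ {m | ¬ContinuousAt (RmN N f) m} :=
      ((WaveAux.RmN_antitone N f).countable_not_continuousAt).ae_notMem volume
    filter_upwards [hD] with m hm hmem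
    rw [Set.uIoc_of_le hm₀.le] at hmem
    have hcont : ContinuousAt (RmN N f) m := not_not.1 hm
    exact (WaveAux.tendsto_RmN N fk hfk f hf hf0 hconv hmem.1 hcont).const_mul
      (1 / m₀ * Φ (-m / m₀))
end
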